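/- Let α ∈ (0, 1/2), T > 0, η₀ ∈ ℝ, let b : ℝ → ℝ be Lipschitz and let ζ : [0,T] → ℝ be (1−α)-Hölder continuous. For ε > 0 let x^ε : [0,T] → ℝ be the unique continuous solution of x^ε_t = η₀ + ζ_t + ∫₀ᵗ [ b(x^ε_s) + (1/ε) f(x^ε_s) ] ds, and let v : [0,T] → ℝ be the unique continuous solution of v_t = η₀ + ζ_t + ∫₀ᵗ b(v_s) ds, and u : [0,T] → ℝ the unique continuous solution of u_t = η₀ + ζ_t + ∫₀ᵗ b( u_s + max_{s' ∈ [0,s]} u_{s'}⁻ ) ds. Then for every ε > 0 and t ∈ [0,T], v_t ≤ x^ε_t and |x^ε_t| ≤ |v_t| + 2 max_{s ∈ [0,t]} |u_s|; in particular sup_{ε > 0} |x^ε_t| ≤ |v_t| + 2 max_{s ∈ [0,t]} |u_s|. -/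

import Mathlib

open MeasureTheory Set Filter Topology
open Nat

noncomputable section

/-- `f` is `γ`-Hölder continuous on `[a,b]`. -/
def HolderOnIcc (γ a b : ℝ) (f : ℝ → ℝ) : Prop :=
  ∃ C : ℝ, 0 ≤ C ∧ ∀ s ∈ Set.Icc a b, ∀ t ∈ Set.Icc a b, |f t - f s| ≤ C * |t - s| ^ γ

/-- The penalization function `f`: a `C²_b` nonincreasing function vanishing on `[0, ∞)`
with `0 < f x ≤ x⁻` for `x < 0`. -/
def PenaltyFun (f : ℝ → ℝ) : Prop :=
  ContDiff ℝ 2 f ∧ Antitone f ∧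
  (∃ M : ℝ, ∀ x : ℝ, |deriv f x| ≤ M ∧ |deriv (deriv f) x| ≤ M) ∧
  (∀ x : ℝ, 0 ≤ x → f x = 0) ∧
  (∀ x : ℝ, x < 0 → 0 < f x ∧ f x ≤ -x)

/-- The running maximum of the negative part of `u` on `[0, s]`. -/
def runNegMax (u : ℝ → ℝ) (s : ℝ) : ℝ :=
  sSup ((fun s' => max 0 (-u s')) '' Set.Icc 0 s)

lemma gron_iter (K c d M : ℝ) (hK : 0 ≤ K) (hM : 0 ≤ M) (hcd : c ≤ d) (g : ℝ → ℝ)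
    (hint : IntervalIntegrable g volume c d)
    (hbdd : ∀ s ∈ Set.Icc c d, g s ≤ M)
    (hineq : ∀ t ∈ Set.Icc c d, g t ≤ ∫ s in c..t, K * g s) :
    ∀ t ∈ Set.Icc c d, g t ≤ 0 := by
  have key : ∀ n : ℕ, ∀ t ∈ Set.Icc c d, g t ≤ M * (K * (t - c)) ^ n / n ! := by
    intro n
    induction n with
    | zero => intro t ht; simpa using hbdd t ht
    | succ n ih =>
      intro t ht
      have hct : c ≤ t := ht.1
      have hintt : IntervalIntegrable g volume c t :=
        hint.mono_set (by rw [Set.uIcc_of_le hct, Set.uIcc_of_le hcd]; exact Set.Icc_subset_Icc le_rfl ht.2)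
      have h1 : (∫ s in c..t, K * g s) ≤ ∫ s in c..t, K * (M * (K * (s - c)) ^ n / n !) := by
        apply intervalIntegral.integral_mono_on hct (hintt.const_mul K)
          ((by continuity : Continuous fun s => K * (M * (K * (s - c)) ^ n / n !)).intervalIntegrable c t)
        intro s hs
        exact mul_le_mul_of_nonneg_left (ih s ⟨hs.1, hs.2.trans ht.2⟩) hK
      have h2 : (∫ s in c..t, K * (M * (K * (s - c)) ^ n / n !)) =
          M * (K * (t - c)) ^ (n + 1) / (n + 1)! := by
        have h3 : ∀ s : ℝ, K * (M * (K * (s - c)) ^ n / n !) =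
            (M * K ^ (n+1) / n !) * (s - c) ^ n := by
          intro s; rw [mul_pow]; ring
        simp_rw [h3]
        rw [intervalIntegral.integral_const_mul]
        have h4 : (∫ s in c..t, (s - c) ^ n) = (t - c) ^ (n + 1) / (n + 1) := by
          rw [intervalIntegral.integral_comp_sub_right (fun y => y ^ n) c]
          simp [integral_pow]
        rw [h4, Nat.factorial_succ, mul_pow]
        push_cast
        field_simp
      calc g t ≤ ∫ s in c..t, K * g s := hineq t ht
        _ ≤ _ := h1
        _ = _ := h2
  intro t ht
  have hlim : Tendsto (fun n : ℕ => M * (K * (t - c)) ^ n / n !) atTop (𝓝 0) := by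
    have := FloorSemiring.tendsto_pow_div_factorial_atTop (K * (t - c))
    simpa [mul_div_assoc] using (this.const_mul M)
  exact ge_of_tendsto' hlim fun n => key n t ht

lemma comparison_le_zero (K T₀ : ℝ) (hK : 0 ≤ K) (hT₀ : 0 ≤ T₀) (g : ℝ → ℝ)
    (hbdd : ∃ M, ∀ s ∈ Set.Icc 0 T₀, g s ≤ M)
    (hint : IntervalIntegrable g volume 0 T₀)
    (h0 : g 0 ≤ 0)
    (husc : ∀ t₀ ∈ Set.Icc 0 T₀, ∀ seq : ℕ → ℝ,
      (∀ n, seq n ∈ Set.Icc 0 T₀ ∧ seq n ≤ t₀ ∧ g (seq n) ≤ 0) →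
      Filter.Tendsto seq Filter.atTop (𝓝 t₀) → g t₀ ≤ 0)
    (hstep : ∀ t₀ t : ℝ, 0 ≤ t₀ → t₀ < t → t ≤ T₀ →
      (∀ s ∈ Set.Ioc t₀ t, 0 < g s) →
      g t ≤ g t₀ + ∫ s in t₀..t, K * g s) :
    ∀ t ∈ Set.Icc 0 T₀, g t ≤ 0 := by
  intro t ht
  by_contra hpos
  push_neg at hpos
  set S : Set ℝ := {s ∈ Set.Icc 0 t | g s ≤ 0} with hS
  have hS0 : (0 : ℝ) ∈ S := ⟨⟨le_rfl, ht.1⟩, h0⟩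
  have hSbdd : BddAbove S := ⟨t, fun s hs => hs.1.2⟩
  set t₀ := sSup S with ht₀def
  have ht₀t : t₀ ≤ t := csSup_le ⟨0, hS0⟩ fun s hs => hs.1.2
  have ht₀0 : 0 ≤ t₀ := le_csSup hSbdd hS0
  have ht₀mem : t₀ ∈ Set.Icc 0 T₀ := ⟨ht₀0, ht₀t.trans ht.2⟩
  have hgt₀ : g t₀ ≤ 0 := by
    obtain ⟨seq, hseqS, hseqlim⟩ := mem_closure_iff_seq_limit.1 (csSup_mem_closure ⟨0, hS0⟩ hSbdd)
    exact husc t₀ ht₀mem seq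
      (fun n => ⟨⟨(hseqS n).1.1, (hseqS n).1.2.trans ht.2⟩, le_csSup hSbdd (hseqS n), (hseqS n).2⟩)
      hseqlim
  have ht₀lt : t₀ < t := lt_of_le_of_ne ht₀t (fun h => absurd (h ▸ hgt₀) (not_le.2 hpos))
  have hposIoc : ∀ s ∈ Set.Ioc t₀ t, 0 < g s := by
    intro s hs
    by_contra hneg
    push_neg at hneg
    exact absurd (le_csSup hSbdd ⟨⟨ht₀0.trans hs.1.le, hs.2⟩, hneg⟩) (not_le.2 hs.1)
  obtain ⟨M, hM⟩ := hbdd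
  have hMbd : ∀ s ∈ Set.Icc t₀ t, g s ≤ max M 0 :=
    fun s hs => (hM s ⟨ht₀0.trans hs.1, hs.2.trans ht.2⟩).trans (le_max_left _ _)
  have hintt : IntervalIntegrable g volume t₀ t :=
    hint.mono_set (by
      rw [Set.uIcc_of_le ht₀lt.le, Set.uIcc_of_le hT₀]
      exact Set.Icc_subset_Icc ht₀0 (ht.2))
  have := gron_iter K t₀ t (max M 0) hK (le_max_right _ _) ht₀lt.le g hintt hMbd ?_ t
    ⟨ht₀lt.le, le_rfl⟩ |>.trans_lt hpos
  · exact lt_irrefl _ this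
  · intro τ hτ
    rcases eq_or_lt_of_le hτ.1 with h | h
    · rw [← h]; simpa using hgt₀
    · calc g τ ≤ g t₀ + ∫ s in t₀..τ, K * g s :=
            hstep t₀ τ ht₀0 h (hτ.2.trans ht.2)
              (fun s hs => hposIoc s ⟨hs.1, hs.2.trans hτ.2⟩)
        _ ≤ ∫ s in t₀..τ, K * g s := by linarith

/-- Lower bound `v ≤ x^ε` and the uniform-in-`ε` bound
`|x^ε_t| ≤ |v_t| + 2 max_{s ≤ t} |u_s|` for the penalized solutions. -/
theorem penalized_uniform_bound
    (α T η₀ : ℝ) (hα : α ∈ Set.Ioo (0 : ℝ) (1 / 2)) (hT : 0 < T)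
    (b : ℝ → ℝ) (K : NNReal) (hb : LipschitzWith K b)
    (ζ : ℝ → ℝ) (hζ : HolderOnIcc (1 - α) 0 T ζ)
    (f : ℝ → ℝ) (hf : PenaltyFun f)
    (x : ℝ → ℝ → ℝ)
    (hx_cont : ∀ ε : ℝ, 0 < ε → ContinuousOn (x ε) (Set.Icc 0 T))
    (hx : ∀ ε : ℝ, 0 < ε → ∀ t ∈ Set.Icc 0 T,
      x ε t = η₀ + ζ t + ∫ s in (0 : ℝ)..t, (b (x ε s) + (1 / ε) * f (x ε s)))
    (v : ℝ → ℝ)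
    (hv_cont : ContinuousOn v (Set.Icc 0 T))
    (hv : ∀ t ∈ Set.Icc 0 T, v t = η₀ + ζ t + ∫ s in (0 : ℝ)..t, b (v s))
    (u : ℝ → ℝ)
    (hu_cont : ContinuousOn u (Set.Icc 0 T))
    (hu : ∀ t ∈ Set.Icc 0 T,
      u t = η₀ + ζ t + ∫ s in (0 : ℝ)..t, b (u s + runNegMax u s)) :
    (∀ ε : ℝ, 0 < ε → ∀ t ∈ Set.Icc 0 T, v t ≤ x ε t) ∧
    (∀ ε : ℝ, 0 < ε → ∀ t ∈ Set.Icc 0 T,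
      |x ε t| ≤ |v t| + 2 * sSup ((fun s => |u s|) '' Set.Icc 0 t)) ∧
    (∀ t ∈ Set.Icc 0 T,
      sSup ((fun ε => |x ε t|) '' Set.Ioi 0) ≤
        |v t| + 2 * sSup ((fun s => |u s|) '' Set.Icc 0 t)) := by
  obtain ⟨hf_cd, hf_anti, hf_bd, hf_zero, hf_neg⟩ := hf
  have hfcont : Continuous f := hf_cd.continuous
  have hf0 : ∀ y : ℝ, 0 ≤ f y := by
    intro y
    rcases le_or_gt 0 y with h | h
    · rw [hf_zero y h]
    · exact (hf_neg y h).1.le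
  set L : ℝ → ℝ := runNegMax u with hLdef
  -- basic facts about L on [0,T]
  have hnimg : ∀ s : ℝ, 0 ≤ s → ((fun s' => max 0 (-u s')) '' Set.Icc 0 s).Nonempty :=
    fun s hs => (Set.nonempty_Icc.2 hs).image _
  have hcont_neg : ContinuousOn (fun s' => max 0 (-u s')) (Set.Icc 0 T) :=
    ContinuousOn.sup continuousOn_const hu_cont.neg
  have hbimg : ∀ s ∈ Set.Icc (0:ℝ) T, BddAbove ((fun s' => max 0 (-u s')) '' Set.Icc 0 s) :=
    fun s hs => IsCompact.bddAbove_image isCompact_Icc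
      (hcont_neg.mono (Set.Icc_subset_Icc le_rfl hs.2))
  have hLmono : ∀ s ∈ Set.Icc (0:ℝ) T, ∀ t ∈ Set.Icc (0:ℝ) T, s ≤ t → L s ≤ L t := by
    intro s hs t ht hst
    exact csSup_le_csSup (hbimg t ht) (hnimg s hs.1)
      (Set.image_mono (Set.Icc_subset_Icc le_rfl hst))
  have hLge : ∀ s ∈ Set.Icc (0:ℝ) T, max 0 (-u s) ≤ L s := by
    intro s hs
    exact le_csSup (hbimg s hs) (Set.mem_image_of_mem _ ⟨hs.1, le_rfl⟩)
  have hL0 : ∀ s ∈ Set.Icc (0:ℝ) T, 0 ≤ L s :=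
    fun s hs => (le_max_left _ _).trans (hLge s hs)
  have hLy0 : ∀ s ∈ Set.Icc (0:ℝ) T, 0 ≤ u s + L s := by
    intro s hs
    have := (le_max_right (0:ℝ) (-u s)).trans (hLge s hs)
    linarith
  have hLtop : ∀ s ∈ Set.Icc (0:ℝ) T, L s ≤ L T :=
    fun s hs => hLmono s hs T ⟨hT.le, le_rfl⟩ hs.2
  -- clamp
  set c : ℝ → ℝ := fun r => min (max r 0) T with hcdef
  have hcmem : ∀ r, c r ∈ Set.Icc (0:ℝ) T :=
    fun r => ⟨le_min (le_max_right r 0) hT.le, min_le_right _ _⟩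
  have hc_id : ∀ r ∈ Set.Icc (0:ℝ) T, c r = r := by
    intro r hr
    simp only [hcdef]
    rw [max_eq_left hr.1, min_eq_left hr.2]
  have hccont : Continuous c := (continuous_id.max continuous_const).min continuous_const
  have hcmono : Monotone c := fun a b' hab =>
    min_le_min (max_le_max hab le_rfl) le_rfl
  have hLcm : Measurable (fun r => L (c r)) := by
    apply Monotone.measurable
    intro a b' hab
    exact hLmono _ (hcmem a) _ (hcmem b') (hcmono hab)
  have hucm : Continuous (fun r => u (c r)) := hu_cont.comp_continuous hccont hcmem
  -- integrability of L
  have hLint : IntegrableOn L (Set.Icc 0 T) volume := by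
    have h1 : IntegrableOn (fun r => L (c r)) (Set.Icc 0 T) volume := by
      apply Integrable.mono'
        (integrableOn_const (C := L T) measure_Icc_lt_top.ne)
        (hLcm.aestronglyMeasurable.restrict)
      filter_upwards with r
      rw [Real.norm_eq_abs, abs_of_nonneg (hL0 _ (hcmem r))]
      exact hLtop _ (hcmem r)
    exact h1.congr_fun (fun r hr => by simp only []; rw [hc_id r hr]) measurableSet_Icc
  -- integrability of b ∘ (u + L)
  obtain ⟨Cu, hCu⟩ := isCompact_Icc.exists_bound_of_continuousOn hu_cont
  have hbLip : ∀ y : ℝ, |b y| ≤ |b 0| + K * |y| := by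
    intro y
    have h1 := hb.dist_le_mul y 0
    rw [Real.dist_eq, Real.dist_eq, sub_zero] at h1
    calc |b y| = |b y - b 0 + b 0| := by norm_num
      _ ≤ |b y - b 0| + |b 0| := abs_add_le _ _
      _ ≤ K * |y| + |b 0| := by linarith
      _ = |b 0| + K * |y| := by ring
  have hφuint : IntegrableOn (fun s => b (u s + L s)) (Set.Icc 0 T) volume := by
    have hmeas : Measurable (fun r => b (u (c r) + L (c r))) :=
      hb.continuous.measurable.comp (hucm.measurable.add hLcm)
    have h1 : IntegrableOn (fun r => b (u (c r) + L (c r))) (Set.Icc 0 T) volume := by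
      apply Integrable.mono'
        (integrableOn_const (C := |b 0| + K * (Cu + L T)) measure_Icc_lt_top.ne)
        (hmeas.aestronglyMeasurable.restrict)
      filter_upwards with r
      rw [Real.norm_eq_abs]
      refine (hbLip _).trans ?_
      have h2 : |u (c r) + L (c r)| ≤ Cu + L T := by
        have h3 := hCu (c r) (hcmem r)
        rw [Real.norm_eq_abs] at h3
        calc |u (c r) + L (c r)| ≤ |u (c r)| + |L (c r)| := abs_add_le _ _
          _ ≤ Cu + L T := by
              rw [abs_of_nonneg (hL0 _ (hcmem r))]
              exact add_le_add h3 (hLtop _ (hcmem r))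
      exact add_le_add_right (mul_le_mul_of_nonneg_left h2 K.coe_nonneg) _
    exact h1.congr_fun (fun r hr => by simp only []; rw [hc_id r hr]) measurableSet_Icc
  -- helper: IntegrableOn (Icc 0 T) → IntervalIntegrable on subintervals
  have hII : ∀ q : ℝ → ℝ, IntegrableOn q (Set.Icc 0 T) volume →
      ∀ a' ∈ Set.Icc (0:ℝ) T, ∀ b' ∈ Set.Icc (0:ℝ) T, IntervalIntegrable q volume a' b' :=
    fun q hq a' ha' b' hb' =>
      (hq.mono_set (Set.uIcc_subset_Icc ha' hb')).intervalIntegrable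
  -- helper: additivity of the integral over adjacent intervals
  have hincr : ∀ q : ℝ → ℝ,
      (∀ a' ∈ Set.Icc (0:ℝ) T, ∀ b' ∈ Set.Icc (0:ℝ) T, IntervalIntegrable q volume a' b') →
      ∀ t₀ ∈ Set.Icc (0:ℝ) T, ∀ t ∈ Set.Icc (0:ℝ) T,
      (∫ s in (0:ℝ)..t, q s) - (∫ s in (0:ℝ)..t₀, q s) = ∫ s in t₀..t, q s := by
    intro q hq t₀ ht₀ t ht
    have := intervalIntegral.integral_add_adjacent_intervals
      (hq 0 ⟨le_rfl, hT.le⟩ t₀ ht₀) (hq t₀ ht₀ t ht)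
    linarith
  -- Part A : v ≤ x ε
  have partA : ∀ ε : ℝ, 0 < ε → ∀ t ∈ Set.Icc 0 T, v t ≤ x ε t := by
    intro ε hε
    have hxc := hx_cont ε hε
    set g := fun s => v s - x ε s with hgdef
    have hgcont : ContinuousOn g (Set.Icc 0 T) := hv_cont.sub hxc
    have hqv : ContinuousOn (fun s => b (v s)) (Set.Icc 0 T) :=
      hb.continuous.comp_continuousOn hv_cont
    have hqx : ContinuousOn (fun s => b (x ε s) + (1/ε) * f (x ε s)) (Set.Icc 0 T) :=
      (hb.continuous.comp_continuousOn hxc).add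
        (continuousOn_const.mul (hfcont.comp_continuousOn hxc))
    have hqvI := hII _ hqv.integrableOn_Icc
    have hqxI := hII _ hqx.integrableOn_Icc
    have key : ∀ t ∈ Set.Icc 0 T, g t ≤ 0 := by
      apply comparison_le_zero K T K.coe_nonneg hT.le g
      · obtain ⟨M, hM⟩ := isCompact_Icc.exists_bound_of_continuousOn hgcont
        exact ⟨M, fun s hs => (le_abs_self _).trans
          (by simpa [Real.norm_eq_abs] using hM s hs)⟩
      · exact hII _ hgcont.integrableOn_Icc 0 ⟨le_rfl, hT.le⟩ T ⟨hT.le, le_rfl⟩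
      · have h1 := hv 0 ⟨le_rfl, hT.le⟩
        have h2 := hx ε hε 0 ⟨le_rfl, hT.le⟩
        simp only [intervalIntegral.integral_same] at h1 h2
        simp [hgdef, h1, h2]
      · intro t₀ ht₀ seq hseq hlim
        have : Tendsto (fun n => g (seq n)) atTop (𝓝 (g t₀)) :=
          ((hgcont t₀ ht₀).tendsto).comp
            (tendsto_nhdsWithin_of_tendsto_nhds_of_eventually_within seq hlim
              (Filter.Eventually.of_forall fun n => (hseq n).1))
        exact le_of_tendsto this (Filter.Eventually.of_forall fun n => (hseq n).2.2)
      · intro t₀ t h0t₀ ht₀t htT hpos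
        have ht₀mem : t₀ ∈ Set.Icc (0:ℝ) T := ⟨h0t₀, ht₀t.le.trans htT⟩
        have htmem : t ∈ Set.Icc (0:ℝ) T := ⟨h0t₀.trans ht₀t.le, htT⟩
        have hsub : Set.Ioc t₀ t ⊆ Set.Icc 0 T :=
          Set.Ioc_subset_Icc_self.trans (Set.Icc_subset_Icc h0t₀ htT)
        have e1 := hv t htmem; have e2 := hv t₀ ht₀mem
        have e3 := hincr _ hqvI t₀ ht₀mem t htmem
        have e4 := hx ε hε t htmem; have e5 := hx ε hε t₀ ht₀mem
        have e6 := hincr _ hqxI t₀ ht₀mem t htmem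
        have hgsplit : g t - g t₀ = (v t - v t₀) - (x ε t - x ε t₀) := by
          simp only [hgdef]; ring
        have hgeq : g t = g t₀ + ∫ s in t₀..t,
            (b (v s) - (b (x ε s) + (1/ε) * f (x ε s))) := by
          rw [intervalIntegral.integral_sub (hqvI t₀ ht₀mem t htmem) (hqxI t₀ ht₀mem t htmem)]
          linarith
        rw [hgeq]
        have hmono : (∫ s in t₀..t, (b (v s) - (b (x ε s) + (1/ε) * f (x ε s)))) ≤
            ∫ s in t₀..t, (K:ℝ) * g s := by
          rw [intervalIntegral.integral_of_le ht₀t.le, intervalIntegral.integral_of_le ht₀t.le]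
          apply setIntegral_mono_on
          · exact MeasureTheory.IntegrableOn.mono_set (hqv.sub hqx).integrableOn_Icc hsub
          · exact MeasureTheory.IntegrableOn.mono_set
              (MeasureTheory.Integrable.const_mul hgcont.integrableOn_Icc _) hsub
          · exact measurableSet_Ioc
          · intro s hs
            have hgs : (0:ℝ) < v s - x ε s := hpos s hs
            have hd := hb.dist_le_mul (v s) (x ε s)
            rw [Real.dist_eq, Real.dist_eq, abs_of_pos hgs] at hd
            have h1 : b (v s) - b (x ε s) ≤ (K:ℝ) * (v s - x ε s) :=
              (le_abs_self _).trans hd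
            have h2 : 0 ≤ (1/ε) * f (x ε s) := mul_nonneg (by positivity) (hf0 _)
            simp only [hgdef]
            linarith
        linarith
    intro t ht
    have h := key t ht
    simp only [hgdef] at h
    linarith
  -- Part B : x ε ≤ u + L
  have partB : ∀ ε : ℝ, 0 < ε → ∀ t ∈ Set.Icc 0 T, x ε t ≤ u t + L t := by
    intro ε hε
    have hxc := hx_cont ε hε
    set w := fun s => x ε s - u s with hwdef
    have hwcont : ContinuousOn w (Set.Icc 0 T) := hxc.sub hu_cont
    set g := fun s => w s - L s with hgdef
    have hqx : ContinuousOn (fun s => b (x ε s) + (1/ε) * f (x ε s)) (Set.Icc 0 T) :=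
      (hb.continuous.comp_continuousOn hxc).add
        (continuousOn_const.mul (hfcont.comp_continuousOn hxc))
    have hqxI := hII _ hqx.integrableOn_Icc
    have hquI := hII _ hφuint
    have hgint : IntegrableOn g (Set.Icc 0 T) volume := hwcont.integrableOn_Icc.sub hLint
    have hgI := hII _ hgint
    have key : ∀ t ∈ Set.Icc 0 T, g t ≤ 0 := by
      apply comparison_le_zero K T K.coe_nonneg hT.le g
      · obtain ⟨M, hM⟩ := isCompact_Icc.exists_bound_of_continuousOn hwcont
        refine ⟨M, fun s hs => ?_⟩
        have h1 := hM s hs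
        rw [Real.norm_eq_abs] at h1
        have h2 := hL0 s hs
        have h3 := le_abs_self (w s)
        simp only [hgdef]
        linarith
      · exact hgI 0 ⟨le_rfl, hT.le⟩ T ⟨hT.le, le_rfl⟩
      · have h1 := hx ε hε 0 ⟨le_rfl, hT.le⟩
        have h2 := hu 0 ⟨le_rfl, hT.le⟩
        simp only [intervalIntegral.integral_same] at h1 h2
        have h3 : 0 ≤ L 0 := hL0 0 ⟨le_rfl, hT.le⟩
        simp only [hgdef, hwdef]
        linarith
      · intro t₀ ht₀ seq hseq hlim
        have hwt : Tendsto (fun n => w (seq n)) atTop (𝓝 (w t₀)) :=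
          ((hwcont t₀ ht₀).tendsto).comp
            (tendsto_nhdsWithin_of_tendsto_nhds_of_eventually_within seq hlim
              (Filter.Eventually.of_forall fun n => (hseq n).1))
        have h1 : ∀ n, g t₀ ≤ w t₀ - w (seq n) := by
          intro n
          have hL1 : L (seq n) ≤ L t₀ := hLmono _ (hseq n).1 _ ht₀ (hseq n).2.1
          have hg1 : g (seq n) ≤ 0 := (hseq n).2.2
          simp only [hgdef] at hg1 ⊢
          linarith
        have h2 : Tendsto (fun n => w t₀ - w (seq n)) atTop (𝓝 0) := by
          have := (tendsto_const_nhds (x := w t₀) (f := atTop)).sub hwt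
          simpa using this
        exact ge_of_tendsto' h2 h1
      · intro t₀ t h0t₀ ht₀t htT hpos
        have ht₀mem : t₀ ∈ Set.Icc (0:ℝ) T := ⟨h0t₀, ht₀t.le.trans htT⟩
        have htmem : t ∈ Set.Icc (0:ℝ) T := ⟨h0t₀.trans ht₀t.le, htT⟩
        have hsub : Set.Ioc t₀ t ⊆ Set.Icc 0 T :=
          Set.Ioc_subset_Icc_self.trans (Set.Icc_subset_Icc h0t₀ htT)
        have e1 := hx ε hε t htmem; have e2 := hx ε hε t₀ ht₀mem
        have e3 := hincr _ hqxI t₀ ht₀mem t htmem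
        have e4 := hu t htmem; have e5 := hu t₀ ht₀mem
        have e6 := hincr _ hquI t₀ ht₀mem t htmem
        have hLm : L t₀ ≤ L t := hLmono _ ht₀mem _ htmem ht₀t.le
        have hgsplit : g t - g t₀ = (x ε t - x ε t₀) - (u t - u t₀) - (L t - L t₀) := by
          simp only [hgdef, hwdef]; ring
        have hgeq : g t ≤ g t₀ + ∫ s in t₀..t,
            ((b (x ε s) + (1/ε) * f (x ε s)) - b (u s + L s)) := by
          rw [intervalIntegral.integral_sub (hqxI t₀ ht₀mem t htmem) (hquI t₀ ht₀mem t htmem)]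
          have hIx : x ε t - x ε t₀ = (ζ t - ζ t₀) + ∫ s in t₀..t, (b (x ε s) + (1/ε) * f (x ε s)) := by
            rw [e1, e2]; linarith [e3]
          have hIu : u t - u t₀ = (ζ t - ζ t₀) + ∫ s in t₀..t, b (u s + L s) := by
            rw [e4, e5]; linarith [e6]
          set A := ∫ s in t₀..t, (b (x ε s) + (1/ε) * f (x ε s)) with hA
          set B := ∫ s in t₀..t, b (u s + L s) with hB
          linarith
        have hmono : (∫ s in t₀..t, ((b (x ε s) + (1/ε) * f (x ε s)) - b (u s + L s))) ≤
            ∫ s in t₀..t, (K:ℝ) * g s := by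
          rw [intervalIntegral.integral_of_le ht₀t.le, intervalIntegral.integral_of_le ht₀t.le]
          apply setIntegral_mono_on
          · exact MeasureTheory.IntegrableOn.mono_set
              (hqx.integrableOn_Icc.sub hφuint) hsub
          · exact MeasureTheory.IntegrableOn.mono_set
              (MeasureTheory.Integrable.const_mul hgint _) hsub
          · exact measurableSet_Ioc
          · intro s hs
            have hsmem : s ∈ Set.Icc (0:ℝ) T := hsub hs
            have hgs : 0 < g s := hpos s hs
            have hy0 : 0 ≤ u s + L s := hLy0 s hsmem
            have hq : x ε s - (u s + L s) = g s := by simp only [hgdef, hwdef]; ring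
            have hxpos : 0 ≤ x ε s := by linarith
            have hfz : f (x ε s) = 0 := hf_zero _ hxpos
            have hd := hb.dist_le_mul (x ε s) (u s + L s)
            rw [Real.dist_eq, Real.dist_eq, hq, abs_of_pos hgs] at hd
            have h1 : b (x ε s) - b (u s + L s) ≤ (K:ℝ) * g s := (le_abs_self _).trans hd
            simp only [hfz, mul_zero, add_zero]
            exact h1
        exact hgeq.trans (add_le_add_right hmono _)
    intro t ht
    have h := key t ht
    simp only [hgdef, hwdef] at h
    linarith
  -- assembly
  have habs_cont : ContinuousOn (fun s => |u s|) (Set.Icc 0 T) := hu_cont.abs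
  have partB' : ∀ ε : ℝ, 0 < ε → ∀ t ∈ Set.Icc 0 T,
      |x ε t| ≤ |v t| + 2 * sSup ((fun s => |u s|) '' Set.Icc 0 t) := by
    intro ε hε t ht
    set St := sSup ((fun s => |u s|) '' Set.Icc 0 t) with hSt
    have hbddS : BddAbove ((fun s => |u s|) '' Set.Icc 0 t) :=
      isCompact_Icc.bddAbove_image (habs_cont.mono (Set.Icc_subset_Icc le_rfl ht.2))
    have h0S : 0 ≤ St :=
      (abs_nonneg (u 0)).trans (le_csSup hbddS (Set.mem_image_of_mem _ ⟨le_rfl, ht.1⟩))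
    have huS : u t ≤ St :=
      (le_abs_self _).trans (le_csSup hbddS (Set.mem_image_of_mem _ ⟨ht.1, le_rfl⟩))
    have hLS : L t ≤ St := by
      apply csSup_le (hnimg t ht.1)
      rintro a ⟨s', hs', rfl⟩
      exact max_le ((abs_nonneg (u s')).trans
          (le_csSup hbddS (Set.mem_image_of_mem _ hs')))
        ((neg_le_abs (u s')).trans
          (le_csSup hbddS (Set.mem_image_of_mem _ hs')))
    have hA := partA ε hε t ht
    have hB := partB ε hε t ht
    have hv1 : -|v t| ≤ v t := neg_abs_le (v t)
    rw [abs_le]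
    constructor
    · linarith
    · linarith [abs_nonneg (v t)]
  refine ⟨partA, partB', fun t ht => Real.sSup_le ?_ ?_⟩
  · rintro a ⟨ε, hε, rfl⟩
    exact partB' ε hε t ht
  · have hbddS : BddAbove ((fun s => |u s|) '' Set.Icc 0 t) :=
      isCompact_Icc.bddAbove_image (habs_cont.mono (Set.Icc_subset_Icc le_rfl ht.2))
    have h0S : 0 ≤ sSup ((fun s => |u s|) '' Set.Icc 0 t) :=
      (abs_nonneg (u 0)).trans (le_csSup hbddS (Set.mem_image_of_mem _ ⟨le_rfl, ht.1⟩))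
    positivity
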